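/- In an RSG, an allocation a is a Nash equilibrium if and only if: for each type 2 resource i, |a_i| = q_i; for each type 1 resource i, |a_i| ∈ {q_i - 1, q_i}; and for some type 1 resource i, |a_i| = q_i. -/

import Mathlib

variable {N M : Type*}

/-- Number of agents assigned to resource `i` at allocation `a`. -/
def load [Fintype N] [DecidableEq M] (a : N → M) (i : M) : ℕ :=
  (Finset.univ.filter (fun j => a j = i)).card

/-- The cost incurred by agent `j` at allocation `a` for cost profile `f`. -/
def cost [Fintype N] [DecidableEq M] (f : M → ℕ → ℕ) (a : N → M) (j : N) : ℕ :=
  f (a j) (load a (a j))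

/-- The maximum cost over resources at allocation `a`. -/
def maxcost [Fintype N] [Fintype M] [DecidableEq M] (f : M → ℕ → ℕ) (a : N → M) : ℕ :=
  Finset.univ.sup (fun i => f i (load a i))

/-- The minmaxcost `α` of the RSG: minimum over allocations of the maxcost. -/
noncomputable def minmax (N : Type*) [Fintype N] [Fintype M] [DecidableEq M] (f : M → ℕ → ℕ) : ℕ :=
  sInf (Set.range (maxcost (N := N) f))

/-- The quota of resource `i`: the largest `t` with `f i t ≤ α`. -/
noncomputable def quota (f : M → ℕ → ℕ) (α : ℕ) (i : M) : ℕ :=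
  sSup {t | f i t ≤ α}

/-- `a` is a Nash equilibrium: no single agent can strictly decrease its cost
by switching to another resource. -/
def Nash [Fintype N] [DecidableEq M] (f : M → ℕ → ℕ) (a : N → M) : Prop :=
  ∀ j : N, ∀ i : M, i ≠ a j → cost f a j ≤ f i (load a i + 1)

/-- `a` is `c`-stable: coalition `c` has no deviation making every member weakly
better off and some member strictly better off. -/
def cStable [Fintype N] [DecidableEq N] [DecidableEq M]
    (f : M → ℕ → ℕ) (a : N → M) (c : Finset N) : Prop :=
  ¬ ∃ b : N → M, (∀ j ∉ c, b j = a j) ∧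
      (∀ j ∈ c, cost f b j ≤ cost f a j) ∧ (∃ j ∈ c, cost f b j < cost f a j)


section Aux
variable [Fintype N] [Fintype M] [DecidableEq M]

omit [Fintype M] [DecidableEq M] in
lemma RSGle_self_apply (f : M → ℕ → ℕ) (hmono : ∀ i, StrictMono (f i)) (i : M) (t : ℕ) :
    t ≤ f i t := (hmono i).le_apply

lemma RSGsum_load (a : N → M) : ∑ i : M, load a i = Fintype.card N := by
  classical
  rw [← Finset.card_univ]
  exact (Finset.card_eq_sum_card_fiberwise (fun x _ => Finset.mem_univ (a x))).symm

omit [Fintype N] [Fintype M] [DecidableEq M] in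
lemma RSGquota_bdd (f : M → ℕ → ℕ) (hmono : ∀ i, StrictMono (f i)) (α : ℕ) (i : M) :
    BddAbove {t | f i t ≤ α} :=
  ⟨α, fun t ht => le_trans (RSGle_self_apply f hmono i t) ht⟩

omit [Fintype N] [Fintype M] [DecidableEq M] in
lemma RSGquota_le (f : M → ℕ → ℕ) (hmono : ∀ i, StrictMono (f i)) (hzero : ∀ i, f i 0 = 0)
    (α : ℕ) (i : M) : f i (quota f α i) ≤ α := by
  have : quota f α i ∈ {t | f i t ≤ α} :=
    Nat.sSup_mem ⟨0, by simp [hzero i]⟩ (RSGquota_bdd f hmono α i)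
  exact this

omit [Fintype N] [Fintype M] [DecidableEq M] in
lemma RSGle_quota (f : M → ℕ → ℕ) (hmono : ∀ i, StrictMono (f i)) {α : ℕ} {i : M} {t : ℕ}
    (h : f i t ≤ α) : t ≤ quota f α i :=
  le_csSup (RSGquota_bdd f hmono α i) h

omit [Fintype N] [Fintype M] [DecidableEq M] in
lemma RSGlt_quota_succ (f : M → ℕ → ℕ) (hmono : ∀ i, StrictMono (f i)) (α : ℕ) (i : M) :
    α < f i (quota f α i + 1) := by
  by_contra h
  push_neg at h
  exact absurd (RSGle_quota f hmono h) (by omega)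

lemma RSGexists_alloc [Nonempty M] (c : M → ℕ) (hc : Fintype.card N ≤ ∑ i : M, c i) :
    ∃ a : N → M, ∀ i, load a i ≤ c i := by
  classical
  have hcard : Fintype.card N ≤ Fintype.card (Σ i : M, Fin (c i)) := by
    simpa using hc
  obtain ⟨e⟩ := Function.Embedding.nonempty_of_card_le hcard
  refine ⟨fun j => (e j).1, fun i => ?_⟩
  have : load (fun j => (e j).1) i ≤ (Finset.range (c i)).card := by
    apply Finset.card_le_card_of_injOn (fun j => ((e j).2 : ℕ))
    · intro j hj
      simp only [Finset.mem_coe, Finset.mem_filter] at hj ⊢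
      rw [Finset.mem_range, ← hj.2]
      exact (e j).2.isLt
    · intro j1 h1 j2 h2 hv
      simp only [Finset.mem_coe, Finset.mem_filter] at h1 h2
      apply e.injective
      exact Sigma.ext (h1.2.trans h2.2.symm)
        ((Fin.heq_ext_iff (by rw [h1.2, h2.2])).mpr hv)
  rwa [Finset.card_range] at this

omit [Fintype M] in
lemma RSGexists_agent (a : N → M) {i : M} (h : 0 < load a i) :
    ∃ j, a j = i := by
  obtain ⟨j, hj⟩ := Finset.card_pos.mp h
  exact ⟨j, (Finset.mem_filter.mp hj).2⟩

end Aux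

/-- Characterization of Nash equilibria in RSGs (Anshelevich et al.): `a` is a Nash
equilibrium iff every type-2 resource is filled to its quota, every type-1 resource is
assigned its quota or one less, and some type-1 resource is filled to its quota. -/
theorem nash_characterization [Fintype N] [Fintype M] [DecidableEq M] [Nonempty M]
    (f : M → ℕ → ℕ) (hmono : ∀ i, StrictMono (f i)) (hzero : ∀ i, f i 0 = 0)
    (a : N → M) :
    Nash f a ↔
      ((∀ i : M, f i (quota f (minmax N f) i) < minmax N f →
          load a i = quota f (minmax N f) i) ∧
       (∀ i : M, f i (quota f (minmax N f) i) = minmax N f →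
          load a i = quota f (minmax N f) i - 1 ∨ load a i = quota f (minmax N f) i) ∧
       (∃ i : M, f i (quota f (minmax N f) i) = minmax N f ∧
          load a i = quota f (minmax N f) i)) := by
  classical
  set α := minmax N f with hαdef
  set q : M → ℕ := quota f α with hqdef
  have hqle : ∀ i, f i (q i) ≤ α := fun i => RSGquota_le f hmono hzero α i
  have hqsucc : ∀ i, α < f i (q i + 1) := fun i => RSGlt_quota_succ f hmono α i
  have hsum : ∑ i : M, load a i = Fintype.card N := RSGsum_load a
  have hmem : α ∈ Set.range (maxcost (N := N) f) :=
    Nat.sInf_mem (Set.range_nonempty _)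
  obtain ⟨astar, hastar⟩ := hmem
  have hminle : ∀ b : N → M, α ≤ maxcost f b := fun b => Nat.sInf_le ⟨b, rfl⟩
  have hsumq : Fintype.card N ≤ ∑ i : M, q i := by
    rw [← RSGsum_load astar]
    apply Finset.sum_le_sum
    intro i _
    apply RSGle_quota f hmono
    calc f i (load astar i) ≤ maxcost f astar := Finset.le_sup (f := fun i => f i (load astar i)) (Finset.mem_univ i)
      _ = α := hastar
  constructor
  · intro hN
    by_cases hα0 : α = 0
    · have hn0 : Fintype.card N = 0 := by
        rw [← RSGsum_load astar]
        apply Finset.sum_eq_zero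
        intro i _
        have h1 : f i (load astar i) ≤ 0 := by
          rw [← hα0, ← hastar]; exact Finset.le_sup (f := fun i => f i (load astar i)) (Finset.mem_univ i)
        have h2 := RSGle_self_apply f hmono i (load astar i)
        omega
      have hload0 : ∀ i, load a i = 0 := by
        intro i
        have h0 : ∑ i : M, load a i = 0 := by rw [hsum, hn0]
        exact Finset.sum_eq_zero_iff.mp h0 i (Finset.mem_univ i)
      have hq0 : ∀ i, q i = 0 := by
        intro i
        have h1 := RSGle_self_apply f hmono i (q i)
        have h2 := hqle i
        omega
      refine ⟨fun i hi => absurd hi (by omega), fun i _ => ?_, ?_⟩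
      · left; rw [hload0 i, hq0 i]
      · obtain ⟨i⟩ := ‹Nonempty M›
        exact ⟨i, by rw [hq0 i, hzero i, hα0], by rw [hload0 i, hq0 i]⟩
    · set q' : M → ℕ := quota f (α - 1) with hq'def
      have hq'le : ∀ i, f i (q' i) ≤ α - 1 := fun i => RSGquota_le f hmono hzero _ i
      have hsumq' : ∑ i : M, q' i < Fintype.card N := by
        by_contra h
        push_neg at h
        obtain ⟨b, hb⟩ := RSGexists_alloc q' h
        have hbc : maxcost f b ≤ α - 1 := by
          apply Finset.sup_le
          intro i _
          exact le_trans ((hmono i).monotone (hb i)) (hq'le i)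
        have := hminle b
        omega
      have htyp2 : ∀ i, f i (q i) < α → q' i = q i := by
        intro i hi
        have h1 : q i ≤ q' i := RSGle_quota f hmono (by omega)
        have h2 : q' i ≤ q i := RSGle_quota f hmono (le_trans (hq'le i) (by omega))
        omega
      have htyp1 : ∀ i, f i (q i) = α → q' i + 1 = q i := by
        intro i hi
        have hq1 : 1 ≤ q i := by
          rcases Nat.eq_zero_or_pos (q i) with h | h
          · rw [h, hzero i] at hi; omega
          · omega
        have h1 : q i - 1 ≤ q' i := by
          apply RSGle_quota f hmono
          have : f i (q i - 1) < f i (q i) := hmono i (by omega)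
          omega
        have h2 : q' i < q i := by
          apply (hmono i).lt_iff_lt.mp
          have := hq'le i; omega
        omega
      have hload_le : ∀ i, load a i ≤ q i := by
        by_contra h
        push_neg at h
        obtain ⟨i0, hi0⟩ := h
        have hsplit : ∑ i ∈ Finset.univ.erase i0, load a i
            < ∑ i ∈ Finset.univ.erase i0, q i := by
          have e1 := Finset.sum_erase_add Finset.univ (load a) (Finset.mem_univ i0)
          have e2 := Finset.sum_erase_add Finset.univ q (Finset.mem_univ i0)
          omega
        obtain ⟨i', hi'mem, hi'⟩ := Finset.exists_lt_of_sum_lt hsplit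
        have hne : i' ≠ i0 := (Finset.mem_erase.mp hi'mem).1
        obtain ⟨j, hj⟩ := RSGexists_agent a (i := i0) (by omega)
        have hnash := hN j i' (by rw [hj]; exact hne)
        simp only [cost, hj] at hnash
        have h1 : f i0 (q i0 + 1) ≤ f i0 (load a i0) := (hmono i0).monotone (by omega)
        have h2 : f i' (load a i' + 1) ≤ f i' (q i') := (hmono i').monotone (by omega)
        have h3 := hqsucc i0
        have h4 := hqle i'
        omega
      obtain ⟨istar, -, histar⟩ : ∃ i ∈ Finset.univ, q' i < load a i := by
        apply Finset.exists_lt_of_sum_lt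
        omega
      have histar1 : f istar (q istar) = α := by
        rcases lt_or_eq_of_le (hqle istar) with h | h
        · have h1 := htyp2 istar h; have h2 := hload_le istar; omega
        · exact h
      have histar2 : load a istar = q istar := by
        have h1 := htyp1 istar histar1
        have h2 := hload_le istar
        omega
      have hload_ge : ∀ i, q' i ≤ load a i := by
        by_contra h
        push_neg at h
        obtain ⟨i, hi⟩ := h
        have hne : i ≠ istar := by
          intro h; rw [h] at hi; omega
        obtain ⟨j, hj⟩ := RSGexists_agent a (i := istar)
          (by have := htyp1 istar histar1; omega)
        have hnash := hN j i (by rw [hj]; exact hne)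
        simp only [cost, hj] at hnash
        rw [histar2, histar1] at hnash
        have h2 : f i (load a i + 1) ≤ f i (q' i) := (hmono i).monotone (by omega)
        have h3 := hq'le i
        omega
      refine ⟨?_, ?_, ⟨istar, histar1, histar2⟩⟩
      · intro i hi
        have h1 := htyp2 i hi
        have h2 := hload_le i; have h3 := hload_ge i; omega
      · intro i hi
        have h1 := htyp1 i hi
        have h2 := hload_le i; have h3 := hload_ge i; omega
  · rintro ⟨h2, h1, -⟩
    intro j i hne
    have hload_le : ∀ i, load a i ≤ q i := by
      intro i
      rcases lt_or_eq_of_le (hqle i) with h | h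
      · rw [h2 i h]
      · rcases h1 i h with h' | h' <;> omega
    have hcost : cost f a j ≤ α := by
      simp only [cost]
      exact le_trans ((hmono (a j)).monotone (hload_le (a j))) (hqle (a j))
    rcases lt_or_ge (load a i) (q i) with h | h
    · rcases lt_or_eq_of_le (hqle i) with ht | ht
      · have := h2 i ht; omega
      · rcases h1 i ht with h' | h'
        · have he : load a i + 1 = q i := by omega
          rw [he, ht]
          exact hcost
        · omega
    · have h5 : f i (q i + 1) ≤ f i (load a i + 1) := (hmono i).monotone (by omega)
      have h6 := hqsucc i
      omega
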